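/- Let d ≥ 2, s ∈ (0,1), μ > 0, 2μ + λ > 0, and let α ∈ (2s, 1]. Let u : ℝ^d → ℝ^d be bounded and α-Hölder continuous with Hölder constant K (that is, |u(x)−u(y)| ≤ K|x−y|^α for all x, y). Then for every x the two integrals in the second-order-difference definition of 𝕃^s u(x) converge absolutely, and there exists a constant C depending only on d, s, α, μ, λ such that |𝕃^s u(x) − 𝕃^s u(x')| ≤ C K |x−x'|^{α−2s} for all x, x' ∈ ℝ^d; i.e., 𝕃^s u is (α−2s)-Hölder continuous with constant C K. -/

import Mathlib

open Real MeasureTheory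
open scoped RealInnerProductSpace

open Set Metric
open scoped ENNReal

set_option maxHeartbeats 1000000

noncomputable section

lemma lintegral_fun_norm_aux {d : ℕ} (hd : 0 < d) (f : ℝ → ℝ≥0∞) (hf : Measurable f) :
    ∫⁻ x : EuclideanSpace ℝ (Fin d), f ‖x‖ =
      (volume : Measure (EuclideanSpace ℝ (Fin d))).toSphere univ *
        ∫⁻ y in Ioi (0 : ℝ), ENNReal.ofReal (y ^ (d - 1)) * f y := by
  haveI : Nonempty (Fin d) := ⟨⟨0, hd⟩⟩
  set μ : Measure (EuclideanSpace ℝ (Fin d)) := volume with hμ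
  have hdim : Module.finrank ℝ (EuclideanSpace ℝ (Fin d)) = d := finrank_euclideanSpace_fin
  calc
    ∫⁻ x : EuclideanSpace ℝ (Fin d), f ‖x‖ ∂μ
        = ∫⁻ x : ({0}ᶜ : Set (EuclideanSpace ℝ (Fin d))), f ‖(x : EuclideanSpace ℝ (Fin d))‖
            ∂(μ.comap (↑)) := by
          rw [lintegral_subtype_comap (measurableSet_singleton (0 : EuclideanSpace ℝ (Fin d))).compl
            (fun x => f ‖x‖), restrict_compl_singleton]
    _ = ∫⁻ p : sphere (0 : EuclideanSpace ℝ (Fin d)) 1 × Ioi (0 : ℝ), f p.2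
            ∂(μ.toSphere.prod (Measure.volumeIoiPow (Module.finrank ℝ (EuclideanSpace ℝ (Fin d)) - 1))) := by
          rw [← μ.measurePreserving_homeomorphUnitSphereProd.lintegral_comp_emb
            (Homeomorph.measurableEmbedding _) (fun p => f p.2)]
          simp
    _ = ∫⁻ p : sphere (0 : EuclideanSpace ℝ (Fin d)) 1 × Ioi (0 : ℝ),
          (fun _ : sphere (0 : EuclideanSpace ℝ (Fin d)) 1 => (1 : ℝ≥0∞)) p.1 *
            (fun y : Ioi (0 : ℝ) => f y) p.2
            ∂(μ.toSphere.prod (Measure.volumeIoiPow (d - 1))) := by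
          rw [hdim]; simp
    _ = μ.toSphere univ * ∫⁻ y : Ioi (0 : ℝ), f y ∂(Measure.volumeIoiPow (d - 1)) := by
          rw [lintegral_prod_mul aemeasurable_const
            ((show Measurable fun y : Ioi (0:ℝ) => f y from hf.comp measurable_subtype_coe).aemeasurable), lintegral_one]
    _ = μ.toSphere univ * ∫⁻ y in Ioi (0 : ℝ), ENNReal.ofReal (y ^ (d - 1)) * f y := by
          rw [Measure.volumeIoiPow, lintegral_withDensity_eq_lintegral_mul _
            ((measurable_subtype_coe.pow_const _).ennreal_ofReal)
            (show Measurable fun y : Ioi (0:ℝ) => f y from hf.comp measurable_subtype_coe)]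
          simp only [Pi.mul_apply]
          rw [lintegral_subtype_comap measurableSet_Ioi
            (fun y => ENNReal.ofReal (y ^ (d - 1)) * f y)]

lemma integrable_comp_norm_aux {d : ℕ} (hd : 0 < d) (g : ℝ → ℝ) (hg : Measurable g)
    (h0 : ∀ y, 0 ≤ g y)
    (hfin : ∫⁻ y in Ioi (0 : ℝ), ENNReal.ofReal (y ^ (d - 1)) * ENNReal.ofReal (g y) < ⊤) :
    Integrable (fun x : EuclideanSpace ℝ (Fin d) => g ‖x‖) := by
  haveI : Nonempty (Fin d) := ⟨⟨0, hd⟩⟩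
  refine ⟨((hg.comp measurable_norm).aestronglyMeasurable), ?_⟩
  have h1 : (∫⁻ x : EuclideanSpace ℝ (Fin d), ‖g ‖x‖‖ₑ) =
      ∫⁻ x : EuclideanSpace ℝ (Fin d), ENNReal.ofReal (g ‖x‖) :=
    lintegral_enorm_of_nonneg fun x => h0 _
  rw [HasFiniteIntegral, h1, lintegral_fun_norm_aux hd _ (hg.ennreal_ofReal)]
  exact ENNReal.mul_lt_top (measure_lt_top _ _) hfin

lemma indicator_ball_norm_rpow {d : ℕ} {β r : ℝ} (hβ0 : β ≠ 0) :
    Set.indicator (ball (0 : EuclideanSpace ℝ (Fin d)) r)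
        (fun h : EuclideanSpace ℝ (Fin d) => ‖h‖ ^ β) =
      fun h : EuclideanSpace ℝ (Fin d) =>
        Set.indicator (Ioo 0 r) (fun t : ℝ => t ^ β) ‖h‖ := by
  funext h
  rcases eq_or_ne h 0 with rfl | hh
  · simp [Set.indicator_apply, Real.zero_rpow hβ0]
  · have hn : 0 < ‖h‖ := norm_pos_iff.2 hh
    by_cases hlt : ‖h‖ < r
    · rw [Set.indicator_of_mem (mem_ball_zero_iff.2 hlt), Set.indicator_of_mem (Set.mem_Ioo.2 ⟨hn, hlt⟩)]
    · rw [Set.indicator_of_notMem (fun hm => hlt (mem_ball_zero_iff.1 hm)),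
        Set.indicator_of_notMem (fun hm => hlt hm.2)]

lemma indicator_compl_ball_norm_rpow {d : ℕ} {γ r : ℝ} (hγ0 : γ ≠ 0) (hr : 0 < r) :
    Set.indicator (ball (0 : EuclideanSpace ℝ (Fin d)) r)ᶜ
        (fun h : EuclideanSpace ℝ (Fin d) => ‖h‖ ^ γ) =
      fun h : EuclideanSpace ℝ (Fin d) =>
        Set.indicator (Ici r) (fun t : ℝ => t ^ γ) ‖h‖ := by
  funext h
  by_cases hle : r ≤ ‖h‖
  · rw [Set.indicator_of_mem (by simpa [mem_ball_zero_iff] using hle.not_gt),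
      Set.indicator_of_mem (Set.mem_Ici.2 hle)]
  · rw [Set.indicator_of_notMem (by simpa [mem_ball_zero_iff] using lt_of_not_ge hle),
      Set.indicator_of_notMem (fun hm => hle (Set.mem_Ici.1 hm))]

lemma fin_ball_aux {d : ℕ} (hd : 0 < d) {β r : ℝ} (hβ : -(d : ℝ) < β) (hr : 0 < r) :
    ∫⁻ y in Ioi (0 : ℝ), ENNReal.ofReal (y ^ (d - 1)) *
      ENNReal.ofReal (Set.indicator (Ioo 0 r) (fun t : ℝ => t ^ β) y) < ⊤ := by
  have hp : (-1 : ℝ) < (d : ℝ) - 1 + β := by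
    have : (1 : ℝ) ≤ d := by exact_mod_cast hd
    linarith
  have hcongr : ∀ y ∈ Ioi (0 : ℝ),
      ENNReal.ofReal (y ^ (d - 1)) *
        ENNReal.ofReal (Set.indicator (Ioo 0 r) (fun t : ℝ => t ^ β) y) =
      Set.indicator (Ioo 0 r) (fun t : ℝ => ENNReal.ofReal (t ^ ((d : ℝ) - 1 + β))) y := by
    intro y hy
    by_cases hm : y ∈ Ioo (0 : ℝ) r
    · rw [Set.indicator_of_mem hm, Set.indicator_of_mem hm,
        ← ENNReal.ofReal_mul (pow_nonneg hm.1.le _)]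
      congr 1
      rw [← Real.rpow_natCast y (d - 1), Real.rpow_add hm.1, Nat.cast_sub hd]
      norm_num
    · rw [Set.indicator_of_notMem hm, Set.indicator_of_notMem hm]
      simp
  rw [setLIntegral_congr_fun measurableSet_Ioi (fun y hy => hcongr y hy),
    lintegral_indicator measurableSet_Ioo, Measure.restrict_restrict measurableSet_Ioo,
    show Ioo (0:ℝ) r ∩ Ioi 0 = Ioo 0 r from Set.inter_eq_left.2 (fun y hy => hy.1)]
  refine IntegrableOn.setLIntegral_lt_top ?_
  have h1 : IntegrableOn (fun t : ℝ => t ^ ((d : ℝ) - 1 + β)) (Ioc 0 r) := by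
    rw [← intervalIntegrable_iff_integrableOn_Ioc_of_le hr.le]
    exact intervalIntegral.intervalIntegrable_rpow' hp
  exact h1.mono_set Ioo_subset_Ioc_self

lemma fin_tail_aux {d : ℕ} (hd : 0 < d) {γ r : ℝ} (hγ : γ < -(d : ℝ)) (hr : 0 < r) :
    ∫⁻ y in Ioi (0 : ℝ), ENNReal.ofReal (y ^ (d - 1)) *
      ENNReal.ofReal (Set.indicator (Ici r) (fun t : ℝ => t ^ γ) y) < ⊤ := by
  have hp : (d : ℝ) - 1 + γ < -1 := by
    have : (0 : ℝ) ≤ d := Nat.cast_nonneg d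
    linarith
  have hcongr : ∀ y ∈ Ioi (0 : ℝ),
      ENNReal.ofReal (y ^ (d - 1)) *
        ENNReal.ofReal (Set.indicator (Ici r) (fun t : ℝ => t ^ γ) y) =
      Set.indicator (Ici r) (fun t : ℝ => ENNReal.ofReal (t ^ ((d : ℝ) - 1 + γ))) y := by
    intro y hy
    by_cases hm : y ∈ Ici r
    · rw [Set.indicator_of_mem hm, Set.indicator_of_mem hm,
        ← ENNReal.ofReal_mul (pow_nonneg (le_of_lt (mem_Ioi.1 hy)) _)]
      congr 1
      rw [← Real.rpow_natCast y (d - 1), Real.rpow_add (mem_Ioi.1 hy), Nat.cast_sub hd]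
      norm_num
    · rw [Set.indicator_of_notMem hm, Set.indicator_of_notMem hm]
      simp
  rw [setLIntegral_congr_fun measurableSet_Ioi (fun y hy => hcongr y hy),
    lintegral_indicator measurableSet_Ici, Measure.restrict_restrict measurableSet_Ici,
    show Ici r ∩ Ioi 0 = Ici r from Set.inter_eq_left.2 (fun y hy => lt_of_lt_of_le hr hy)]
  refine IntegrableOn.setLIntegral_lt_top ?_
  have h1 : IntegrableOn (fun t : ℝ => t ^ ((d : ℝ) - 1 + γ)) (Ioi r) :=
    integrableOn_Ioi_rpow_of_lt hp hr
  rw [integrableOn_Ici_iff_integrableOn_Ioi]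
  exact h1

lemma integrableOn_ball_norm_rpow {d : ℕ} (hd : 0 < d) {β r : ℝ} (hβ : -(d : ℝ) < β)
    (hβ0 : β ≠ 0) (hr : 0 < r) :
    IntegrableOn (fun h : EuclideanSpace ℝ (Fin d) => ‖h‖ ^ β)
      (ball (0 : EuclideanSpace ℝ (Fin d)) r) := by
  rw [← integrable_indicator_iff measurableSet_ball, indicator_ball_norm_rpow hβ0]
  refine integrable_comp_norm_aux hd _ ?_ ?_ (fin_ball_aux hd hβ hr)
  · exact ((by fun_prop : Measurable fun t : ℝ => t ^ β).indicator measurableSet_Ioo)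
  · intro y
    refine Set.indicator_nonneg (fun t ht => ?_) y
    exact Real.rpow_nonneg ht.1.le β

lemma integrableOn_compl_ball_norm_rpow {d : ℕ} (hd : 0 < d) {γ r : ℝ} (hγ : γ < -(d : ℝ))
    (hr : 0 < r) :
    IntegrableOn (fun h : EuclideanSpace ℝ (Fin d) => ‖h‖ ^ γ)
      (ball (0 : EuclideanSpace ℝ (Fin d)) r)ᶜ := by
  have hγ0 : γ ≠ 0 := by
    have : (0:ℝ) ≤ d := Nat.cast_nonneg d
    intro h; rw [h] at hγ; linarith
  rw [← integrable_indicator_iff measurableSet_ball.compl,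
    indicator_compl_ball_norm_rpow hγ0 hr]
  refine integrable_comp_norm_aux hd _ ?_ ?_ (fin_tail_aux hd hγ hr)
  · exact ((by fun_prop : Measurable fun t : ℝ => t ^ γ).indicator measurableSet_Ici)
  · intro y
    refine Set.indicator_nonneg (fun t ht => ?_) y
    exact Real.rpow_nonneg (le_trans hr.le ht) γ

lemma setIntegral_ball_norm_rpow {d : ℕ} (hd : 0 < d) {β r : ℝ} (hβ : -(d : ℝ) < β)
    (hβ0 : β < 0) (hr : 0 < r) :
    ∫ h in ball (0 : EuclideanSpace ℝ (Fin d)) r, ‖h‖ ^ β =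
      ((d : ℝ) * (volume (ball (0 : EuclideanSpace ℝ (Fin d)) 1)).toReal / ((d : ℝ) + β)) *
        r ^ ((d : ℝ) + β) := by
  haveI : Nonempty (Fin d) := ⟨⟨0, hd⟩⟩
  have hdim : Module.finrank ℝ (EuclideanSpace ℝ (Fin d)) = d := finrank_euclideanSpace_fin
  have hdβ : 0 < (d : ℝ) + β := by linarith
  rw [← integral_indicator measurableSet_ball, indicator_ball_norm_rpow hβ0.ne,
    integral_fun_norm_addHaar volume (Set.indicator (Ioo 0 r) (fun t : ℝ => t ^ β)), hdim]
  have hcongr : ∀ y ∈ Ioi (0 : ℝ),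
      y ^ (d - 1) • Set.indicator (Ioo 0 r) (fun t : ℝ => t ^ β) y =
      Set.indicator (Ioo 0 r) (fun t : ℝ => t ^ ((d : ℝ) - 1 + β)) y := by
    intro y hy
    by_cases hm : y ∈ Ioo (0 : ℝ) r
    · rw [Set.indicator_of_mem hm, Set.indicator_of_mem hm, smul_eq_mul,
        ← Real.rpow_natCast y (d - 1), Real.rpow_add hm.1, Nat.cast_sub hd]
      norm_num
    · rw [Set.indicator_of_notMem hm, Set.indicator_of_notMem hm, smul_zero]
  rw [setIntegral_congr_fun measurableSet_Ioi hcongr,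
    setIntegral_indicator measurableSet_Ioo,
    show Ioi (0:ℝ) ∩ Ioo 0 r = Ioo 0 r from Set.inter_eq_right.2 (fun y hy => hy.1),
    ← integral_Ioc_eq_integral_Ioo, ← intervalIntegral.integral_of_le hr.le,
    integral_rpow (Or.inl (by linarith : (-1:ℝ) < (d:ℝ) - 1 + β))]
  have h0 : (0 : ℝ) ^ ((d : ℝ) - 1 + β + 1) = 0 := Real.zero_rpow (by linarith)
  rw [h0]
  have : (d : ℝ) - 1 + β + 1 = (d : ℝ) + β := by ring
  rw [this]
  rw [nsmul_eq_mul, smul_eq_mul]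
  rw [measureReal_def]
  ring

lemma setIntegral_compl_ball_norm_rpow {d : ℕ} (hd : 0 < d) {γ r : ℝ} (hγ : γ < -(d : ℝ))
    (hr : 0 < r) :
    ∫ h in (ball (0 : EuclideanSpace ℝ (Fin d)) r)ᶜ, ‖h‖ ^ γ =
      ((d : ℝ) * (volume (ball (0 : EuclideanSpace ℝ (Fin d)) 1)).toReal / (-((d : ℝ) + γ))) *
        r ^ ((d : ℝ) + γ) := by
  haveI : Nonempty (Fin d) := ⟨⟨0, hd⟩⟩
  have hdim : Module.finrank ℝ (EuclideanSpace ℝ (Fin d)) = d := finrank_euclideanSpace_fin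
  have hdγ : (d : ℝ) + γ < 0 := by linarith
  have hγ0 : γ ≠ 0 := by
    have : (0:ℝ) < d := by exact_mod_cast hd
    intro h; rw [h] at hγ; linarith
  rw [← integral_indicator measurableSet_ball.compl, indicator_compl_ball_norm_rpow hγ0 hr,
    integral_fun_norm_addHaar volume (Set.indicator (Ici r) (fun t : ℝ => t ^ γ)), hdim]
  have hcongr : ∀ y ∈ Ioi (0 : ℝ),
      y ^ (d - 1) • Set.indicator (Ici r) (fun t : ℝ => t ^ γ) y =
      Set.indicator (Ici r) (fun t : ℝ => t ^ ((d : ℝ) - 1 + γ)) y := by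
    intro y hy
    by_cases hm : y ∈ Ici r
    · rw [Set.indicator_of_mem hm, Set.indicator_of_mem hm, smul_eq_mul,
        ← Real.rpow_natCast y (d - 1), Real.rpow_add (mem_Ioi.1 hy), Nat.cast_sub hd]
      norm_num
    · rw [Set.indicator_of_notMem hm, Set.indicator_of_notMem hm, smul_zero]
  rw [setIntegral_congr_fun measurableSet_Ioi hcongr,
    setIntegral_indicator measurableSet_Ici,
    show Ioi (0:ℝ) ∩ Ici r = Ici r from
      Set.inter_eq_right.2 (fun y hy => lt_of_lt_of_le hr hy),
    integral_Ici_eq_integral_Ioi,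
    integral_Ioi_rpow_of_lt (by linarith : (d:ℝ) - 1 + γ < -1) hr]
  have : (d : ℝ) - 1 + γ + 1 = (d : ℝ) + γ := by ring
  rw [this, nsmul_eq_mul, smul_eq_mul, div_neg, neg_div]
  rw [measureReal_def]
  ring

lemma cont_of_holder {d : ℕ} {u : EuclideanSpace ℝ (Fin d) → EuclideanSpace ℝ (Fin d)}
    {K α : ℝ} (hα : 0 < α) (hK : 0 ≤ K)
    (hu : ∀ x y, ‖u x - u y‖ ≤ K * ‖x - y‖ ^ α) : Continuous u := by
  rw [Metric.continuous_iff]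
  intro b ε hε
  refine ⟨(ε / (K + 1)) ^ α⁻¹, Real.rpow_pos_of_pos (by positivity) _, fun a ha => ?_⟩
  have h1 : dist (u a) (u b) ≤ K * ‖a - b‖ ^ α := by
    rw [dist_eq_norm]; exact hu a b
  have h2 : ‖a - b‖ ^ α < ((ε / (K + 1)) ^ α⁻¹) ^ α := by
    refine Real.rpow_lt_rpow (norm_nonneg _) ?_ hα
    rwa [← dist_eq_norm]
  have h3 : ((ε / (K + 1)) ^ α⁻¹) ^ α = ε / (K + 1) := by
    rw [← Real.rpow_mul (by positivity), inv_mul_cancel₀ hα.ne', Real.rpow_one]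
  calc dist (u a) (u b) ≤ K * ‖a - b‖ ^ α := h1
    _ ≤ (K + 1) * ‖a - b‖ ^ α := by
        have := Real.rpow_nonneg (norm_nonneg (a - b)) α
        nlinarith
    _ < (K + 1) * (ε / (K + 1)) := by
        rw [← h3]; exact mul_lt_mul_of_pos_left h2 (by linarith)
    _ = ε := by field_simp

/-- `c_{d,s} = 2^{2s} s Γ(d/2+s)/(π^{d/2} Γ(1−s))`. -/
def cConst (d : ℕ) (s : ℝ) : ℝ :=
  (2 : ℝ) ^ (2 * s) * s * Real.Gamma ((d : ℝ) / 2 + s) /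
    (π ^ ((d : ℝ) / 2) * Real.Gamma (1 - s))

/-- `κ_{d,s} = (d+2s) c_{d,s}`. -/
def kappaConst (d : ℕ) (s : ℝ) : ℝ := ((d : ℝ) + 2 * s) * cConst d s

/-- The fractional Lamé–Navier operator `𝕃^s u` (second-order-difference form) of a
bare vector field. -/
def lameFracFn (d : ℕ) (s μ lam : ℝ)
    (u : EuclideanSpace ℝ (Fin d) → EuclideanSpace ℝ (Fin d))
    (x : EuclideanSpace ℝ (Fin d)) : EuclideanSpace ℝ (Fin d) :=
  (((2 * s + 1) * μ ^ s - (2 * μ + lam) ^ s) / (2 * s) * (cConst d s / 2)) •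
      (∫ h : EuclideanSpace ℝ (Fin d),
        (‖h‖ ^ ((d : ℝ) + 2 * s))⁻¹ • ((2 : ℝ) • u x - u (x + h) - u (x - h))) +
    (((2 * μ + lam) ^ s - μ ^ s) / (2 * s) * (kappaConst d s / 2)) •
      (∫ h : EuclideanSpace ℝ (Fin d),
        (⟪h, (2 : ℝ) • u x - u (x + h) - u (x - h)⟫ /
          (‖h‖ ^ 2 * ‖h‖ ^ ((d : ℝ) + 2 * s))) • h)

/-- If `u` is bounded and `α`-Hölder with `α ∈ (2s,1]`, then `𝕃^s u` is well defined by
absolutely convergent integrals and is `(α−2s)`-Hölder, with constant `C K` where `C`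
depends only on `d, s, α, μ, λ`. -/
theorem lameFrac_holder_mapping (d : ℕ) (hd : 2 ≤ d) (s : ℝ) (hs : s ∈ Set.Ioo (0 : ℝ) 1)
    (μ lam : ℝ) (hμ : 0 < μ) (hlam : 0 < 2 * μ + lam)
    (α : ℝ) (hα : α ∈ Set.Ioc (2 * s) 1) :
    ∃ C : ℝ, 0 < C ∧
      ∀ (u : EuclideanSpace ℝ (Fin d) → EuclideanSpace ℝ (Fin d)) (K M : ℝ),
        (∀ x, ‖u x‖ ≤ M) →
        (∀ x y, ‖u x - u y‖ ≤ K * ‖x - y‖ ^ α) →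
        (∀ x : EuclideanSpace ℝ (Fin d),
          Integrable (fun h : EuclideanSpace ℝ (Fin d) =>
            (‖h‖ ^ ((d : ℝ) + 2 * s))⁻¹ • ((2 : ℝ) • u x - u (x + h) - u (x - h))) ∧
          Integrable (fun h : EuclideanSpace ℝ (Fin d) =>
            (⟪h, (2 : ℝ) • u x - u (x + h) - u (x - h)⟫ /
              (‖h‖ ^ 2 * ‖h‖ ^ ((d : ℝ) + 2 * s))) • h)) ∧
        ∀ x x' : EuclideanSpace ℝ (Fin d),
          ‖lameFracFn d s μ lam u x - lameFracFn d s μ lam u x'‖ ≤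
            C * K * ‖x - x'‖ ^ (α - 2 * s) := by
  obtain ⟨hs0, hs1⟩ := hs
  obtain ⟨hα1, hα2⟩ := hα
  have hd0 : 0 < d := lt_of_lt_of_le two_pos hd
  have hd2 : (2 : ℝ) ≤ (d : ℝ) := by exact_mod_cast hd
  haveI : Nonempty (Fin d) := ⟨⟨0, hd0⟩⟩
  have hα0 : 0 < α := lt_trans (by positivity) hα1
  set p : ℝ := (d : ℝ) + 2 * s with hp_def
  have hp_pos : 0 < p := by positivity
  have hβ : -(d : ℝ) < α - p := by simp only [hp_def]; linarith
  have hβ0 : α - p < 0 := by simp only [hp_def]; linarith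
  have hγ : -p < -(d : ℝ) := by simp only [hp_def]; linarith
  set vol : ℝ := (volume (ball (0 : EuclideanSpace ℝ (Fin d)) 1)).toReal with hvol_def
  have hvol0 : 0 ≤ vol := ENNReal.toReal_nonneg
  set Cb : ℝ := (d : ℝ) * vol / (α - 2 * s) with hCb_def
  set Ct : ℝ := (d : ℝ) * vol / (2 * s) with hCt_def
  have hCb0 : 0 ≤ Cb := div_nonneg (by positivity) (by linarith)
  have hCt0 : 0 ≤ Ct := div_nonneg (by positivity) (by positivity)
  set a₀ : ℝ := ((2 * s + 1) * μ ^ s - (2 * μ + lam) ^ s) / (2 * s) * (cConst d s / 2)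
    with ha₀_def
  set b₀ : ℝ := ((2 * μ + lam) ^ s - μ ^ s) / (2 * s) * (kappaConst d s / 2) with hb₀_def
  refine ⟨(|a₀| + |b₀|) * (4 * Cb + 4 * Ct) + 1, by positivity, ?_⟩
  set C : ℝ := (|a₀| + |b₀|) * (4 * Cb + 4 * Ct) + 1 with hC_def
  intro u K M hM hu
  -- basic positivity facts
  have hK : 0 ≤ K := by
    have h1 := hu 0 (EuclideanSpace.single ⟨0, hd0⟩ (1 : ℝ))
    rw [zero_sub, norm_neg, EuclideanSpace.norm_single, norm_one, Real.one_rpow,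
      mul_one] at h1
    exact le_trans (norm_nonneg _) h1
  have hM0 : 0 ≤ M := le_trans (norm_nonneg _) (hM 0)
  have hu_cont : Continuous u := cont_of_holder hα0 hK hu
  -- the second difference
  set w : EuclideanSpace ℝ (Fin d) → EuclideanSpace ℝ (Fin d) → EuclideanSpace ℝ (Fin d) :=
    fun x h => (2 : ℝ) • u x - u (x + h) - u (x - h) with hw_def
  have hw_eq : ∀ x h, w x h = (u x - u (x + h)) + (u x - u (x - h)) := by
    intro x h
    simp only [hw_def, two_smul]
    abel
  have hw1 : ∀ x h, ‖w x h‖ ≤ 2 * K * ‖h‖ ^ α := by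
    intro x h
    rw [hw_eq]
    refine le_trans (norm_add_le _ _) ?_
    have h1 := hu x (x + h)
    have h2 := hu x (x - h)
    rw [show x - (x + h) = -h by abel, norm_neg] at h1
    rw [show x - (x - h) = h by abel] at h2
    linarith
  have hw2 : ∀ x h, ‖w x h‖ ≤ 4 * M := by
    intro x h
    have h1 : ‖(2 : ℝ) • u x‖ ≤ 2 * M := by
      rw [norm_smul, Real.norm_ofNat]
      have := hM x; nlinarith
    calc ‖w x h‖ ≤ ‖(2 : ℝ) • u x - u (x + h)‖ + ‖u (x - h)‖ := norm_sub_le _ _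
      _ ≤ ‖(2 : ℝ) • u x‖ + ‖u (x + h)‖ + ‖u (x - h)‖ := by
          have := norm_sub_le ((2 : ℝ) • u x) (u (x + h)); linarith
      _ ≤ 2 * M + M + M := by
          have := hM (x + h); have := hM (x - h); linarith
      _ = 4 * M := by ring
  have hwd : ∀ x x' h, ‖w x h - w x' h‖ ≤ 4 * K * ‖x - x'‖ ^ α := by
    intro x x' h
    have heq : w x h - w x' h =
        ((u x - u x') + (u x - u x')) - (u (x + h) - u (x' + h)) - (u (x - h) - u (x' - h)) := by
      simp only [hw_def, two_smul]
      abel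
    rw [heq]
    have h0 := hu x x'
    have h1 := hu (x + h) (x' + h)
    have h2 := hu (x - h) (x' - h)
    rw [show x + h - (x' + h) = x - x' by abel] at h1
    rw [show x - h - (x' - h) = x - x' by abel] at h2
    calc ‖((u x - u x') + (u x - u x')) - (u (x + h) - u (x' + h)) - (u (x - h) - u (x' - h))‖
        ≤ ‖((u x - u x') + (u x - u x')) - (u (x + h) - u (x' + h))‖ + ‖u (x - h) - u (x' - h)‖ :=
          norm_sub_le _ _
      _ ≤ ‖(u x - u x') + (u x - u x')‖ + ‖u (x + h) - u (x' + h)‖ + ‖u (x - h) - u (x' - h)‖ := by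
          have := norm_sub_le ((u x - u x') + (u x - u x')) (u (x + h) - u (x' + h)); linarith
      _ ≤ (‖u x - u x'‖ + ‖u x - u x'‖) + ‖u (x + h) - u (x' + h)‖ + ‖u (x - h) - u (x' - h)‖ := by
          have := norm_add_le (u x - u x') (u x - u x'); linarith
      _ ≤ 4 * K * ‖x - x'‖ ^ α := by linarith
  -- pointwise bounds for the integrands
  have hcoef0 : ∀ h : EuclideanSpace ℝ (Fin d), 0 ≤ (‖h‖ ^ p)⁻¹ := fun h =>
    inv_nonneg.2 (Real.rpow_nonneg (norm_nonneg _) _)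
  have hb1 : ∀ x h, ‖(‖h‖ ^ p)⁻¹ • w x h‖ = (‖h‖ ^ p)⁻¹ * ‖w x h‖ := by
    intro x h
    rw [norm_smul, Real.norm_eq_abs, abs_of_nonneg (hcoef0 h)]
  have hgen2 : ∀ (v h : EuclideanSpace ℝ (Fin d)),
      ‖(⟪h, v⟫ / (‖h‖ ^ 2 * ‖h‖ ^ p)) • h‖ ≤ (‖h‖ ^ p)⁻¹ * ‖v‖ := by
    intro v h
    by_cases hh : h = 0
    · subst hh
      simp only [smul_zero, norm_zero]
      positivity
    · have hn : 0 < ‖h‖ := norm_pos_iff.2 hh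
      have hnp : 0 < ‖h‖ ^ p := Real.rpow_pos_of_pos hn p
      have hden : 0 < ‖h‖ ^ 2 * ‖h‖ ^ p := by positivity
      rw [norm_smul, Real.norm_eq_abs, abs_div, abs_of_pos hden]
      calc |⟪h, v⟫| / (‖h‖ ^ 2 * ‖h‖ ^ p) * ‖h‖
          ≤ ‖h‖ * ‖v‖ / (‖h‖ ^ 2 * ‖h‖ ^ p) * ‖h‖ := by
            have := abs_real_inner_le_norm h v
            gcongr
        _ = (‖h‖ ^ p)⁻¹ * ‖v‖ := by
            field_simp
  have hchainA : ∀ (c : ℝ) (v h : EuclideanSpace ℝ (Fin d)), 0 ≤ c →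
      ‖v‖ ≤ c * ‖h‖ ^ α → (‖h‖ ^ p)⁻¹ * ‖v‖ ≤ c * ‖h‖ ^ (α - p) := by
    intro c v h hc hv
    have h1 : (‖h‖ ^ p)⁻¹ * ‖v‖ ≤ (‖h‖ ^ p)⁻¹ * (c * ‖h‖ ^ α) :=
      mul_le_mul_of_nonneg_left hv (hcoef0 h)
    refine le_trans h1 (le_of_eq ?_)
    rcases eq_or_lt_of_le (norm_nonneg h) with h0 | h0
    · rw [← h0]
      simp [Real.zero_rpow hα0.ne', Real.zero_rpow (ne_of_lt hβ0)]
    · rw [Real.rpow_sub h0]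
      field_simp
  have hchainB : ∀ (c : ℝ) (v h : EuclideanSpace ℝ (Fin d)), 0 ≤ c →
      ‖v‖ ≤ c → (‖h‖ ^ p)⁻¹ * ‖v‖ ≤ c * ‖h‖ ^ (-p) := by
    intro c v h hc hv
    rw [Real.rpow_neg (norm_nonneg _), mul_comm c]
    exact mul_le_mul_of_nonneg_left hv (hcoef0 h)
  -- measurability
  have hwcont : ∀ x, Continuous (w x) := by
    intro x
    exact (continuous_const.sub (hu_cont.comp (continuous_const.add continuous_id))).sub
      (hu_cont.comp (continuous_const.sub continuous_id))
  have hcoef_meas : Measurable fun h : EuclideanSpace ℝ (Fin d) => (‖h‖ ^ p)⁻¹ := by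
    fun_prop
  have hden_meas : Measurable fun h : EuclideanSpace ℝ (Fin d) =>
      (‖h‖ ^ 2 * ‖h‖ ^ p : ℝ) := by fun_prop
  have hmeas1 : ∀ x, AEStronglyMeasurable
      (fun h => (‖h‖ ^ p)⁻¹ • w x h) (volume : Measure (EuclideanSpace ℝ (Fin d))) := by
    intro x
    exact hcoef_meas.aestronglyMeasurable.smul (hwcont x).aestronglyMeasurable
  have hmeas2 : ∀ x, AEStronglyMeasurable
      (fun h => (⟪h, w x h⟫ / (‖h‖ ^ 2 * ‖h‖ ^ p)) • h)
      (volume : Measure (EuclideanSpace ℝ (Fin d))) := by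
    intro x
    have hnum : Continuous fun h : EuclideanSpace ℝ (Fin d) => ⟪h, w x h⟫ :=
      continuous_id.inner (hwcont x)
    exact ((hnum.measurable.div hden_meas).aestronglyMeasurable).smul
      continuous_id.aestronglyMeasurable
  -- integrability
  have hInt1 : ∀ x, Integrable
      (fun h => (‖h‖ ^ p)⁻¹ • w x h) (volume : Measure (EuclideanSpace ℝ (Fin d))) := by
    intro x
    rw [← integrableOn_univ, ← union_compl_self (ball (0 : EuclideanSpace ℝ (Fin d)) 1)]
    refine IntegrableOn.union ?_ ?_
    · refine Integrable.mono'
        ((integrableOn_ball_norm_rpow hd0 hβ hβ0.ne one_pos).const_mul (2 * K))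
        (hmeas1 x).restrict (ae_of_all _ fun h => ?_)
      rw [hb1]
      exact hchainA (2 * K) _ h (by positivity) (hw1 x h)
    · refine Integrable.mono'
        ((integrableOn_compl_ball_norm_rpow hd0 hγ one_pos).const_mul (4 * M))
        (hmeas1 x).restrict (ae_of_all _ fun h => ?_)
      rw [hb1]
      exact hchainB (4 * M) _ h (by positivity) (hw2 x h)
  have hInt2 : ∀ x, Integrable
      (fun h => (⟪h, w x h⟫ / (‖h‖ ^ 2 * ‖h‖ ^ p)) • h)
      (volume : Measure (EuclideanSpace ℝ (Fin d))) := by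
    intro x
    rw [← integrableOn_univ, ← union_compl_self (ball (0 : EuclideanSpace ℝ (Fin d)) 1)]
    refine IntegrableOn.union ?_ ?_
    · refine Integrable.mono'
        ((integrableOn_ball_norm_rpow hd0 hβ hβ0.ne one_pos).const_mul (2 * K))
        (hmeas2 x).restrict (ae_of_all _ fun h => ?_)
      exact le_trans (hgen2 _ h) (hchainA (2 * K) _ h (by positivity) (hw1 x h))
    · refine Integrable.mono'
        ((integrableOn_compl_ball_norm_rpow hd0 hγ one_pos).const_mul (4 * M))
        (hmeas2 x).restrict (ae_of_all _ fun h => ?_)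
      exact le_trans (hgen2 _ h) (hchainB (4 * M) _ h (by positivity) (hw2 x h))
  refine ⟨fun x => ⟨hInt1 x, hInt2 x⟩, ?_⟩
  intro x x'
  rcases eq_or_ne x x' with rfl | hxx
  · rw [sub_self, norm_zero, sub_self, norm_zero, Real.zero_rpow (by linarith : α - 2 * s ≠ 0),
      mul_zero]
  · set r : ℝ := ‖x - x'‖ with hr_def
    have hr : 0 < r := norm_pos_iff.2 (sub_ne_zero.2 hxx)
    have hrp : 0 ≤ r ^ (α - 2 * s) := Real.rpow_nonneg hr.le _
    -- the master estimate for an integrable function with the two standard bounds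
    have main : ∀ G : EuclideanSpace ℝ (Fin d) → EuclideanSpace ℝ (Fin d),
        Integrable G (volume : Measure (EuclideanSpace ℝ (Fin d))) →
        (∀ h, ‖G h‖ ≤ 4 * K * ‖h‖ ^ (α - p)) →
        (∀ h, ‖G h‖ ≤ 4 * K * r ^ α * ‖h‖ ^ (-p)) →
        ‖∫ h, G h‖ ≤ 4 * K * (Cb + Ct) * r ^ (α - 2 * s) := by
      intro G hG h1 h2
      have e1 : (d : ℝ) + (α - p) = α - 2 * s := by rw [hp_def]; ring
      have e2 : (d : ℝ) + -p = -(2 * s) := by rw [hp_def]; ring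
      calc ‖∫ h, G h‖ ≤ ∫ h, ‖G h‖ := norm_integral_le_integral_norm _
        _ = (∫ h in ball (0 : EuclideanSpace ℝ (Fin d)) r, ‖G h‖) +
            ∫ h in (ball (0 : EuclideanSpace ℝ (Fin d)) r)ᶜ, ‖G h‖ :=
          (integral_add_compl measurableSet_ball hG.norm).symm
        _ ≤ (∫ h in ball (0 : EuclideanSpace ℝ (Fin d)) r, 4 * K * ‖h‖ ^ (α - p)) +
            ∫ h in (ball (0 : EuclideanSpace ℝ (Fin d)) r)ᶜ, 4 * K * r ^ α * ‖h‖ ^ (-p) := by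
          refine add_le_add ?_ ?_
          · exact setIntegral_mono_on hG.norm.integrableOn
              ((integrableOn_ball_norm_rpow hd0 hβ hβ0.ne hr).const_mul _)
              measurableSet_ball (fun h _ => h1 h)
          · exact setIntegral_mono_on hG.norm.integrableOn
              ((integrableOn_compl_ball_norm_rpow hd0 hγ hr).const_mul _)
              measurableSet_ball.compl (fun h _ => h2 h)
        _ = 4 * K * (Cb + Ct) * r ^ (α - 2 * s) := by
          rw [integral_const_mul, integral_const_mul,
            setIntegral_ball_norm_rpow hd0 hβ hβ0 hr,
            setIntegral_compl_ball_norm_rpow hd0 hγ hr, e1, e2]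
          have e3 : r ^ α * r ^ (-(2 * s)) = r ^ (α - 2 * s) := by
            rw [← Real.rpow_add hr, sub_eq_add_neg]
          rw [hCb_def, hCt_def, neg_neg]
          calc 4 * K * ((d : ℝ) * vol / (α - 2 * s) * r ^ (α - 2 * s)) +
                4 * K * r ^ α * ((d : ℝ) * vol / (2 * s) * r ^ (-(2 * s)))
              = 4 * K * ((d : ℝ) * vol / (α - 2 * s)) * r ^ (α - 2 * s) +
                4 * K * ((d : ℝ) * vol / (2 * s)) * (r ^ α * r ^ (-(2 * s))) := by ring
            _ = 4 * K * ((d : ℝ) * vol / (α - 2 * s) + (d : ℝ) * vol / (2 * s)) *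
                r ^ (α - 2 * s) := by rw [e3]; ring
    -- apply to the two differences
    have hG1 : ‖(∫ h, (‖h‖ ^ p)⁻¹ • w x h) - ∫ h, (‖h‖ ^ p)⁻¹ • w x' h‖ ≤
        4 * K * (Cb + Ct) * r ^ (α - 2 * s) := by
      rw [← integral_sub (hInt1 x) (hInt1 x')]
      refine main _ ((hInt1 x).sub (hInt1 x')) (fun h => ?_) (fun h => ?_)
      · calc ‖(‖h‖ ^ p)⁻¹ • w x h - (‖h‖ ^ p)⁻¹ • w x' h‖
            ≤ ‖(‖h‖ ^ p)⁻¹ • w x h‖ + ‖(‖h‖ ^ p)⁻¹ • w x' h‖ := norm_sub_le _ _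
          _ ≤ 2 * K * ‖h‖ ^ (α - p) + 2 * K * ‖h‖ ^ (α - p) := by
              rw [hb1, hb1]
              exact add_le_add (hchainA (2 * K) _ h (by positivity) (hw1 x h))
                (hchainA (2 * K) _ h (by positivity) (hw1 x' h))
          _ = 4 * K * ‖h‖ ^ (α - p) := by ring
      · rw [← smul_sub, norm_smul, Real.norm_eq_abs, abs_of_nonneg (hcoef0 h)]
        exact hchainB (4 * K * r ^ α) _ h (by positivity) (hwd x x' h)
    have hG2 : ‖(∫ h, (⟪h, w x h⟫ / (‖h‖ ^ 2 * ‖h‖ ^ p)) • h) -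
          ∫ h, (⟪h, w x' h⟫ / (‖h‖ ^ 2 * ‖h‖ ^ p)) • h‖ ≤
        4 * K * (Cb + Ct) * r ^ (α - 2 * s) := by
      rw [← integral_sub (hInt2 x) (hInt2 x')]
      refine main _ ((hInt2 x).sub (hInt2 x')) (fun h => ?_) (fun h => ?_)
      · calc ‖(⟪h, w x h⟫ / (‖h‖ ^ 2 * ‖h‖ ^ p)) • h -
              (⟪h, w x' h⟫ / (‖h‖ ^ 2 * ‖h‖ ^ p)) • h‖
            ≤ ‖(⟪h, w x h⟫ / (‖h‖ ^ 2 * ‖h‖ ^ p)) • h‖ +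
              ‖(⟪h, w x' h⟫ / (‖h‖ ^ 2 * ‖h‖ ^ p)) • h‖ := norm_sub_le _ _
          _ ≤ 2 * K * ‖h‖ ^ (α - p) + 2 * K * ‖h‖ ^ (α - p) := by
              exact add_le_add
                (le_trans (hgen2 _ h) (hchainA (2 * K) _ h (by positivity) (hw1 x h)))
                (le_trans (hgen2 _ h) (hchainA (2 * K) _ h (by positivity) (hw1 x' h)))
          _ = 4 * K * ‖h‖ ^ (α - p) := by ring
      · have heq : (⟪h, w x h⟫ / (‖h‖ ^ 2 * ‖h‖ ^ p)) • h -
            (⟪h, w x' h⟫ / (‖h‖ ^ 2 * ‖h‖ ^ p)) • h =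
            (⟪h, w x h - w x' h⟫ / (‖h‖ ^ 2 * ‖h‖ ^ p)) • h := by
          rw [← sub_smul, ← sub_div, ← inner_sub_right]
        rw [heq]
        exact le_trans (hgen2 _ h)
          (hchainB (4 * K * r ^ α) _ h (by positivity) (hwd x x' h))
    -- assemble
    have hexpand : ∀ y, lameFracFn d s μ lam u y =
        a₀ • (∫ h, (‖h‖ ^ p)⁻¹ • w y h) +
        b₀ • (∫ h, (⟪h, w y h⟫ / (‖h‖ ^ 2 * ‖h‖ ^ p)) • h) := fun y => rfl
    rw [hexpand, hexpand]
    have hsplit : a₀ • (∫ h, (‖h‖ ^ p)⁻¹ • w x h) +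
        b₀ • (∫ h, (⟪h, w x h⟫ / (‖h‖ ^ 2 * ‖h‖ ^ p)) • h) -
        (a₀ • (∫ h, (‖h‖ ^ p)⁻¹ • w x' h) +
        b₀ • (∫ h, (⟪h, w x' h⟫ / (‖h‖ ^ 2 * ‖h‖ ^ p)) • h)) =
        a₀ • ((∫ h, (‖h‖ ^ p)⁻¹ • w x h) - ∫ h, (‖h‖ ^ p)⁻¹ • w x' h) +
        b₀ • ((∫ h, (⟪h, w x h⟫ / (‖h‖ ^ 2 * ‖h‖ ^ p)) • h) -
          ∫ h, (⟪h, w x' h⟫ / (‖h‖ ^ 2 * ‖h‖ ^ p)) • h) := by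
      rw [smul_sub, smul_sub]
      abel
    rw [hsplit]
    calc ‖a₀ • ((∫ h, (‖h‖ ^ p)⁻¹ • w x h) - ∫ h, (‖h‖ ^ p)⁻¹ • w x' h) +
        b₀ • ((∫ h, (⟪h, w x h⟫ / (‖h‖ ^ 2 * ‖h‖ ^ p)) • h) -
          ∫ h, (⟪h, w x' h⟫ / (‖h‖ ^ 2 * ‖h‖ ^ p)) • h)‖
        ≤ |a₀| * (4 * K * (Cb + Ct) * r ^ (α - 2 * s)) +
          |b₀| * (4 * K * (Cb + Ct) * r ^ (α - 2 * s)) := by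
          refine le_trans (norm_add_le _ _) (add_le_add ?_ ?_)
          · rw [norm_smul, Real.norm_eq_abs]
            exact mul_le_mul_of_nonneg_left hG1 (abs_nonneg _)
          · rw [norm_smul, Real.norm_eq_abs]
            exact mul_le_mul_of_nonneg_left hG2 (abs_nonneg _)
      _ ≤ C * K * r ^ (α - 2 * s) := by
          rw [hC_def]
          have ha : 0 ≤ |a₀| := abs_nonneg _
          have hb : 0 ≤ |b₀| := abs_nonneg _
          nlinarith [mul_nonneg (mul_nonneg hK hrp) (add_nonneg hCb0 hCt0),
            mul_nonneg hK hrp]
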